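/- For N ~ Poisson(μ) and X₁,...,Xₙ i.i.d. ~ p given N = n, with A measurable and q = p(A): the point counts in A and in Aᶜ are independent Poisson random variables with means μ·q and μ·(1−q) respectively. -/
import Mathlib

open MeasureTheory ProbabilityTheory Finset Classical in
lemma count_measure {T : Type*} [MeasurableSpace T]
    (p : Measure T) [IsProbabilityMeasure p]
    (A : Set T) (hA : MeasurableSet A) (n m : ℕ) :
    (Measure.pi fun _ : Fin n => p)
      {x : Fin n → T | (Finset.univ.filter fun i => x i ∈ A).card = m}
      = (n.choose m) * (p A)^m * (p Aᶜ)^(n-m) := by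
  classical
  set E : Finset (Fin n) → Set (Fin n → T) :=
    fun s => Set.pi Set.univ (fun i => if i ∈ s then A else Aᶜ) with hE
  have hmemE : ∀ s (x : Fin n → T), x ∈ E s ↔ (Finset.univ.filter fun i => x i ∈ A) = s := by
    intro s x
    simp only [hE, Set.mem_pi, Set.mem_univ, forall_true_left]
    constructor
    · intro h
      ext i
      simp only [Finset.mem_filter, Finset.mem_univ, true_and]
      constructor
      · intro hi
        by_contra hs
        have := h i
        rw [if_neg hs] at this
        exact this hi
      · intro hi
        have := h i
        rwa [if_pos hi] at this
    · intro h i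
      by_cases hi : i ∈ s
      · rw [if_pos hi]
        have : i ∈ Finset.univ.filter fun i => x i ∈ A := h ▸ hi
        simpa using this
      · rw [if_neg hi]
        intro hxi
        exact hi (h ▸ (by simpa using hxi : i ∈ Finset.univ.filter fun i => x i ∈ A))
  have hset : {x : Fin n → T | (Finset.univ.filter fun i => x i ∈ A).card = m}
      = ⋃ s ∈ (Finset.powersetCard m (Finset.univ : Finset (Fin n))), E s := by
    ext x
    simp only [Set.mem_setOf_eq, Set.mem_iUnion, Finset.mem_powersetCard]
    constructor
    · intro h
      exact ⟨_, ⟨Finset.subset_univ _, h⟩, (hmemE _ x).2 rfl⟩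
    · rintro ⟨s, ⟨-, hs⟩, hx⟩
      rw [(hmemE s x).1 hx]; exact hs
  rw [hset, measure_biUnion_finset]
  · have hval : ∀ s ∈ Finset.powersetCard m (Finset.univ : Finset (Fin n)),
        (Measure.pi fun _ : Fin n => p) (E s) = (p A)^m * (p Aᶜ)^(n-m) := by
      intro s hs
      rw [Finset.mem_powersetCard] at hs
      rw [hE]
      rw [Measure.pi_pi]
      have : ∀ i : Fin n, p (if i ∈ s then A else Aᶜ)
          = if i ∈ s then p A else p Aᶜ := fun i => by split <;> rfl
      simp_rw [this]
      rw [Finset.prod_ite, Finset.prod_const, Finset.prod_const,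
        Finset.filter_mem_eq_inter, Finset.univ_inter, hs.2]
      congr 1
      rw [Finset.filter_not, Finset.filter_mem_eq_inter, Finset.univ_inter,
        Finset.card_sdiff_of_subset (Finset.subset_univ s), hs.2, Finset.card_univ, Fintype.card_fin]
    rw [Finset.sum_congr rfl hval, Finset.sum_const, Finset.card_powersetCard,
      Finset.card_univ, Fintype.card_fin, nsmul_eq_mul, mul_assoc]
  · intro s hs t ht hst
    simp only [Function.onFun, Set.disjoint_left]
    intro x hxs hxt
    exact hst ((((hmemE s x).1 hxs).symm.trans ((hmemE t x).1 hxt)))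
  · intro s hs
    exact MeasurableSet.univ_pi fun i => by
      by_cases hi : i ∈ s
      · rw [if_pos hi]; exact hA
      · rw [if_neg hi]; exact hA.compl

open MeasureTheory ProbabilityTheory Finset Classical in
/-- Independent Poisson splitting: with `N ~ Poisson(μ)` and, given `N = n`, `X₁,...,Xₙ`
i.i.d. with distribution `p`, and `A` measurable with `q = p(A)`, the counts of points in
`A` and in `Aᶜ` are independent Poisson random variables with means `μ·q` and `μ·(1−q)`:
their joint law factorizes as the product of the two Poisson pmfs. -/
theorem poisson_splitting {T : Type*} [MeasurableSpace T]
    (μr : NNReal) (p : Measure T) [IsProbabilityMeasure p]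
    (A : Set T) (hA : MeasurableSet A) (q : NNReal) (hq : (q : ENNReal) = p A) :
    ∀ m l : ℕ,
      (∑' n : ℕ, poissonPMF μr n *
        (Measure.pi fun _ : Fin n => p)
          {x : Fin n → T | (Finset.univ.filter fun i => x i ∈ A).card = m
            ∧ (Finset.univ.filter fun i => x i ∈ Aᶜ).card = l})
        = poissonPMF (μr * q) m * poissonPMF (μr * (1 - q)) l := by
  classical
  intro m l
  have hq1 : q ≤ 1 := by
    have : (q : ENNReal) ≤ 1 := hq ▸ prob_le_one
    exact_mod_cast this
  have hcompl : p Aᶜ = ((1 - q : NNReal) : ENNReal) := by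
    rw [prob_compl_eq_one_sub hA, ← hq, ENNReal.coe_sub, ENNReal.coe_one]
  -- card identity
  have hcard : ∀ (n : ℕ) (x : Fin n → T),
      (Finset.univ.filter fun i => x i ∈ A).card
        + (Finset.univ.filter fun i => x i ∈ Aᶜ).card = n := by
    intro n x
    have : (Finset.univ.filter fun i => x i ∈ Aᶜ)
        = (Finset.univ.filter fun i => x i ∈ A)ᶜ := by
      ext i; simp
    rw [this, Finset.card_add_card_compl, Fintype.card_fin]
  rw [tsum_eq_single (m + l)]
  · have hsetml : {x : Fin (m+l) → T | (Finset.univ.filter fun i => x i ∈ A).card = m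
        ∧ (Finset.univ.filter fun i => x i ∈ Aᶜ).card = l}
        = {x : Fin (m+l) → T | (Finset.univ.filter fun i => x i ∈ A).card = m} := by
      ext x
      simp only [Set.mem_setOf_eq, and_iff_left_iff_imp]
      intro h
      have := hcard (m+l) x
      omega
    rw [hsetml, count_measure p A hA, ← hq, hcompl]
    simp only [Nat.add_sub_cancel_left]
    -- now pure arithmetic
    have hofq : ((q : ENNReal))^m = ENNReal.ofReal ((q:ℝ)^m) := by
      rw [ENNReal.ofReal_pow q.coe_nonneg, ENNReal.ofReal_coe_nnreal]
    have hofq' : (((1-q : NNReal) : ENNReal))^l = ENNReal.ofReal (((1-q:NNReal):ℝ)^l) := by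
      rw [ENNReal.ofReal_pow (1-q).coe_nonneg, ENNReal.ofReal_coe_nnreal]
    have papp : ∀ (r : NNReal) (k : ℕ), poissonPMF r k = ENNReal.ofReal (poissonPMFReal r k) :=
      fun r k => rfl
    rw [papp, papp, papp, hofq, hofq']
    rw [show ((((m+l).choose m : ℕ)) : ENNReal) = ENNReal.ofReal (((m+l).choose m : ℕ) : ℝ) by
      rw [ENNReal.ofReal_natCast]]
    rw [← ENNReal.ofReal_mul (by positivity), ← ENNReal.ofReal_mul (by positivity),
      ← ENNReal.ofReal_mul poissonPMFReal_nonneg, ← ENNReal.ofReal_mul poissonPMFReal_nonneg]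
    congr 1
    unfold poissonPMFReal
    have hab : ((1-q : NNReal) : ℝ) = 1 - (q:ℝ) := by
      rw [NNReal.coe_sub hq1, NNReal.coe_one]
    have hmul1 : ((μr * q : NNReal) : ℝ) = (μr:ℝ) * q := NNReal.coe_mul _ _
    have hmul2 : ((μr * (1-q) : NNReal) : ℝ) = (μr:ℝ) * ((1-q:NNReal):ℝ) := NNReal.coe_mul _ _
    rw [hmul1, hmul2, hab]
    have hexp : Real.exp (-((μr:ℝ) * q)) * Real.exp (-((μr:ℝ) * (1 - q)))
        = Real.exp (-(μr:ℝ)) := by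
      rw [← Real.exp_add]; ring_nf
    have hchoose : (((m+l).choose m : ℕ) : ℝ) * (Nat.factorial m : ℝ) * (Nat.factorial l : ℝ) = (Nat.factorial (m+l) : ℝ) := by
      have := Nat.choose_mul_factorial_mul_factorial (Nat.le_add_right m l)
      rw [Nat.add_sub_cancel_left] at this
      exact_mod_cast this
    have hm : (0:ℝ) < (Nat.factorial m : ℝ) := by positivity
    have hl : (0:ℝ) < (Nat.factorial l : ℝ) := by positivity
    have hml : (0:ℝ) < (Nat.factorial (m+l) : ℝ) := by positivity
    field_simp
    rw [mul_pow, mul_pow, pow_add]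
    linear_combination (-((μr:ℝ)^m * (μr:ℝ)^l * (q:ℝ)^m * (1-(q:ℝ))^l *
        ((((m+l).choose m : ℕ):ℝ) * (Nat.factorial m : ℝ) * (Nat.factorial l : ℝ)))) * hexp
      + ((μr:ℝ)^m * (μr:ℝ)^l * (q:ℝ)^m * (1-(q:ℝ))^l *
        (Real.exp (-((μr:ℝ)*(q:ℝ))) * Real.exp (-((μr:ℝ)*(1-(q:ℝ)))))) * hchoose
  · intro n hn
    have hempty : {x : Fin n → T | (Finset.univ.filter fun i => x i ∈ A).card = m
        ∧ (Finset.univ.filter fun i => x i ∈ Aᶜ).card = l} = ∅ := by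
      ext x
      simp only [Set.mem_setOf_eq, Set.mem_empty_iff_false, iff_false, not_and]
      intro h1 h2
      exact hn (by rw [← hcard n x, h1, h2])
    rw [hempty, measure_empty, mul_zero]
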